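/- The q-overlapping shuffle product on the free Z[q]-module with basis all compositions is associative. -/

import Mathlib

/-- The weight of a composition: the sum of its entries. -/
def wtc (α : List ℕ+) : ℕ := (α.map fun a => (a : ℕ)).sum

/-- The q-overlapping shuffle product of two compositions, with values in the
free module over `ℤ[q]` (`q = Polynomial.X`) on compositions:
`[] ×_q β = β`, `α ×_q [] = α`, and
`(a::α') ×_q (b::β') = a::(α' ×_q (b::β')) + q^{b·wt(a::α')}·b::((a::α') ×_q β')`
`+ q^{b·wt(α')}·(a+b)::(α' ×_q β')`. -/
noncomputable def qosh : List ℕ+ → List ℕ+ → (List ℕ+ →₀ Polynomial ℤ)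
  | [], β => Finsupp.single β 1
  | a :: α', [] => Finsupp.single (a :: α') 1
  | a :: α', b :: β' =>
      Finsupp.mapDomain (a :: ·) (qosh α' (b :: β'))
        + ((Polynomial.X : Polynomial ℤ) ^ ((b : ℕ) * wtc (a :: α'))) •
            Finsupp.mapDomain (b :: ·) (qosh (a :: α') β')
        + ((Polynomial.X : Polynomial ℤ) ^ ((b : ℕ) * wtc α')) •
            Finsupp.mapDomain ((a + b) :: ·) (qosh α' β')
  termination_by α β => α.length + β.length
  decreasing_by all_goals (simp [List.length_cons]; try omega)

/-- The `ℤ[q]`-bilinear extension of the q-overlapping shuffle product. -/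
noncomputable def qoshMul (x y : List ℕ+ →₀ Polynomial ℤ) : List ℕ+ →₀ Polynomial ℤ :=
  x.sum fun α c => y.sum fun β d => (c * d) • qosh α β

section helpers

local notation "M" => (List ℕ+ →₀ Polynomial ℤ)

lemma wtc_nil : wtc [] = 0 := rfl

lemma wtc_cons (a : ℕ+) (δ : List ℕ+) : wtc (a :: δ) = (a : ℕ) + wtc δ := by simp [wtc]

lemma qosh_nil_left (β : List ℕ+) : qosh [] β = Finsupp.single β 1 := by rw [qosh]

lemma qosh_nil_right (α : List ℕ+) : qosh α [] = Finsupp.single α 1 := by cases α <;> rw [qosh]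

lemma qosh_cons_cons (a b : ℕ+) (α' β' : List ℕ+) : qosh (a::α') (b::β') =
      Finsupp.mapDomain (a :: ·) (qosh α' (b :: β'))
        + ((Polynomial.X : Polynomial ℤ) ^ ((b : ℕ) * wtc (a :: α'))) •
            Finsupp.mapDomain (b :: ·) (qosh (a :: α') β')
        + ((Polynomial.X : Polynomial ℤ) ^ ((b : ℕ) * wtc α')) •
            Finsupp.mapDomain ((a + b) :: ·) (qosh α' β') := by rw [qosh]

lemma qoshMul_single_left (α : List ℕ+) (z : M) :
    qoshMul (Finsupp.single α 1) z = z.sum fun δ d => d • qosh α δ := by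
  unfold qoshMul
  rw [Finsupp.sum_single_index (by simp)]
  simp

lemma qoshMul_single_right (z : M) (γ : List ℕ+) :
    qoshMul z (Finsupp.single γ 1) = z.sum fun δ d => d • qosh δ γ := by
  unfold qoshMul
  refine Finsupp.sum_congr fun δ _ => ?_
  rw [Finsupp.sum_single_index (by simp)]
  simp

lemma qoshMul_zero_left (y : M) : qoshMul 0 y = 0 := Finsupp.sum_zero_index

lemma qoshMul_zero_right (x : M) : qoshMul x 0 = 0 := by
  unfold qoshMul; simp

lemma qoshMul_add_left (x x' y : M) :
    qoshMul (x + x') y = qoshMul x y + qoshMul x' y := by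
  unfold qoshMul
  apply Finsupp.sum_add_index' <;> intros <;>
    simp [add_mul, add_smul, Finsupp.sum_add]

lemma qoshMul_add_right (x y y' : M) :
    qoshMul x (y + y') = qoshMul x y + qoshMul x y' := by
  unfold qoshMul
  rw [← Finsupp.sum_add]
  refine Finsupp.sum_congr fun δ _ => ?_
  apply Finsupp.sum_add_index' <;> intros <;> simp [mul_add, smul_add, add_smul]

lemma qoshMul_smul_left (c : Polynomial ℤ) (x y : M) :
    qoshMul (c • x) y = c • qoshMul x y := by
  unfold qoshMul
  rw [Finsupp.sum_smul_index (fun i => by simp), Finsupp.smul_sum]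
  refine Finsupp.sum_congr fun δ _ => ?_
  rw [Finsupp.smul_sum]
  refine Finsupp.sum_congr fun β _ => ?_
  rw [smul_smul, mul_assoc]

lemma qoshMul_smul_right (c : Polynomial ℤ) (x y : M) :
    qoshMul x (c • y) = c • qoshMul x y := by
  unfold qoshMul
  rw [Finsupp.smul_sum]
  refine Finsupp.sum_congr fun δ _ => ?_
  rw [Finsupp.sum_smul_index (fun i => by simp), Finsupp.smul_sum]
  refine Finsupp.sum_congr fun β _ => ?_
  rw [smul_smul, mul_left_comm]

lemma qoshMul_nil_left (z : M) : qoshMul (Finsupp.single [] 1) z = z := by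
  rw [qoshMul_single_left]
  rw [Finsupp.sum_congr (g2 := fun δ d => Finsupp.single δ d)
    (fun δ _ => by rw [qosh_nil_left, Finsupp.smul_single, smul_eq_mul, mul_one])]
  exact Finsupp.sum_single z

lemma qoshMul_nil_right (z : M) : qoshMul z (Finsupp.single [] 1) = z := by
  rw [qoshMul_single_right]
  rw [Finsupp.sum_congr (g2 := fun δ d => Finsupp.single δ d)
    (fun δ _ => by rw [qosh_nil_right, Finsupp.smul_single, smul_eq_mul, mul_one])]
  exact Finsupp.sum_single z

lemma qoshMul_single_single (α β : List ℕ+) :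
    qoshMul (Finsupp.single α 1) (Finsupp.single β 1) = qosh α β := by
  rw [qoshMul_single_left, Finsupp.sum_single_index (by simp), one_smul]

lemma mapDomain_qsum (f : List ℕ+ → List ℕ+) (z : M) (g : List ℕ+ → M) :
    (z.sum fun δ d => d • Finsupp.mapDomain f (g δ)) =
      Finsupp.mapDomain f (z.sum fun δ d => d • g δ) := by
  rw [show Finsupp.mapDomain f (z.sum fun δ d => d • g δ)
        = (Finsupp.mapDomain.addMonoidHom f) (z.sum fun δ d => d • g δ) from rfl,
      map_finsuppSum]
  exact Finsupp.sum_congr fun δ _ => by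
    simp [Finsupp.mapDomain.addMonoidHom_apply, Finsupp.mapDomain_smul]

lemma smul_qsum (e : Polynomial ℤ) (z : M) (g : List ℕ+ → M) :
    (z.sum fun δ d => d • (e • g δ)) = e • z.sum fun δ d => d • g δ := by
  rw [Finsupp.smul_sum]
  exact Finsupp.sum_congr fun δ _ => smul_comm _ _ _

end helpers
theorem wtc_qosh : ∀ (α β : List ℕ+), ∀ δ ∈ (qosh α β).support, wtc δ = wtc α + wtc β
  | [], β => by
    rw [qosh_nil_left]
    intro δ hδ
    rw [Finsupp.support_single_ne_zero _ one_ne_zero, Finset.mem_singleton] at hδ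
    subst hδ; simp [wtc_nil]
  | a::α', [] => by
    rw [qosh_nil_right]
    intro δ hδ
    rw [Finsupp.support_single_ne_zero _ one_ne_zero, Finset.mem_singleton] at hδ
    subst hδ; simp [wtc_nil]
  | a::α', b::β' => by
    classical
    intro δ hδ
    rw [qosh_cons_cons] at hδ
    rcases Finset.mem_union.mp (Finsupp.support_add hδ) with h | h
    · rcases Finset.mem_union.mp (Finsupp.support_add h) with h1 | h1
      · obtain ⟨δ', hδ', rfl⟩ := Finset.mem_image.mp (Finsupp.mapDomain_support h1)
        rw [wtc_cons, wtc_qosh α' (b::β') δ' hδ']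
        simp only [wtc_cons, PNat.add_coe]; omega
      · obtain ⟨δ', hδ', rfl⟩ :=
          Finset.mem_image.mp (Finsupp.mapDomain_support (Finsupp.support_smul h1))
        rw [wtc_cons, wtc_qosh (a::α') β' δ' hδ']
        simp only [wtc_cons, PNat.add_coe]; omega
    · obtain ⟨δ', hδ', rfl⟩ :=
        Finset.mem_image.mp (Finsupp.mapDomain_support (Finsupp.support_smul h))
      rw [wtc_cons, wtc_qosh α' β' δ' hδ']
      simp only [wtc_cons, PNat.add_coe]; omega
  termination_by α β => α.length + β.length
  decreasing_by all_goals (simp [List.length_cons]; try omega)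

lemma Rlem (a c : ℕ+) (α₁ : List ℕ+) (z : List ℕ+ →₀ Polynomial ℤ) :
    qoshMul (Finsupp.single (a::α₁) 1) (Finsupp.mapDomain (c :: ·) z)
      = Finsupp.mapDomain (a :: ·) (qoshMul (Finsupp.single α₁ 1) (Finsupp.mapDomain (c :: ·) z))
        + ((Polynomial.X : Polynomial ℤ) ^ ((c:ℕ) * wtc (a::α₁))) •
            Finsupp.mapDomain (c :: ·) (qoshMul (Finsupp.single (a::α₁) 1) z)
        + ((Polynomial.X : Polynomial ℤ) ^ ((c:ℕ) * wtc α₁)) •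
            Finsupp.mapDomain ((a+c) :: ·) (qoshMul (Finsupp.single α₁ 1) z) := by
  rw [qoshMul_single_left (a::α₁) (Finsupp.mapDomain (c :: ·) z),
      qoshMul_single_left α₁ (Finsupp.mapDomain (c :: ·) z),
      qoshMul_single_left (a::α₁) z, qoshMul_single_left α₁ z,
      Finsupp.sum_mapDomain_index_inj List.cons_injective,
      Finsupp.sum_mapDomain_index_inj List.cons_injective]
  rw [Finsupp.sum_congr (g2 := fun δ d => d •
        (Finsupp.mapDomain (a :: ·) (qosh α₁ (c :: δ))
          + ((Polynomial.X : Polynomial ℤ) ^ ((c:ℕ) * wtc (a::α₁))) •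
              Finsupp.mapDomain (c :: ·) (qosh (a::α₁) δ)
          + ((Polynomial.X : Polynomial ℤ) ^ ((c:ℕ) * wtc α₁)) •
              Finsupp.mapDomain ((a+c) :: ·) (qosh α₁ δ)))
      (fun δ _ => by rw [qosh_cons_cons])]
  simp only [smul_add]
  rw [Finsupp.sum_add, Finsupp.sum_add, mapDomain_qsum, smul_qsum, smul_qsum,
      mapDomain_qsum, mapDomain_qsum]

lemma Llem (a c : ℕ+) (γ₁ : List ℕ+) (z : List ℕ+ →₀ Polynomial ℤ) (w : ℕ)
    (hz : ∀ δ ∈ z.support, wtc δ = w) :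
    qoshMul (Finsupp.mapDomain (a :: ·) z) (Finsupp.single (c::γ₁) 1)
      = Finsupp.mapDomain (a :: ·) (qoshMul z (Finsupp.single (c::γ₁) 1))
        + ((Polynomial.X : Polynomial ℤ) ^ ((c:ℕ) * ((a:ℕ) + w))) •
            Finsupp.mapDomain (c :: ·)
              (qoshMul (Finsupp.mapDomain (a :: ·) z) (Finsupp.single γ₁ 1))
        + ((Polynomial.X : Polynomial ℤ) ^ ((c:ℕ) * w)) •
            Finsupp.mapDomain ((a+c) :: ·) (qoshMul z (Finsupp.single γ₁ 1)) := by
  rw [qoshMul_single_right (Finsupp.mapDomain (a :: ·) z) (c::γ₁),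
      qoshMul_single_right z (c::γ₁),
      qoshMul_single_right (Finsupp.mapDomain (a :: ·) z) γ₁,
      qoshMul_single_right z γ₁,
      Finsupp.sum_mapDomain_index_inj List.cons_injective,
      Finsupp.sum_mapDomain_index_inj List.cons_injective]
  rw [Finsupp.sum_congr (g2 := fun δ d => d •
        (Finsupp.mapDomain (a :: ·) (qosh δ (c :: γ₁))
          + ((Polynomial.X : Polynomial ℤ) ^ ((c:ℕ) * ((a:ℕ) + w))) •
              Finsupp.mapDomain (c :: ·) (qosh (a::δ) γ₁)
          + ((Polynomial.X : Polynomial ℤ) ^ ((c:ℕ) * w)) •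
              Finsupp.mapDomain ((a+c) :: ·) (qosh δ γ₁)))
      (fun δ hδ => by rw [qosh_cons_cons, wtc_cons, hz δ hδ])]
  simp only [smul_add]
  rw [Finsupp.sum_add, Finsupp.sum_add, mapDomain_qsum, smul_qsum, smul_qsum,
      mapDomain_qsum, mapDomain_qsum]
theorem qosh_assoc_key : ∀ (α β γ : List ℕ+),
    qoshMul (qosh α β) (Finsupp.single γ 1) = qoshMul (Finsupp.single α 1) (qosh β γ)
  | [], β, γ => by
    rw [qosh_nil_left, qoshMul_nil_left, qoshMul_single_single]
  | a::α₁, [], γ => by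
    rw [qosh_nil_right, qosh_nil_left, qoshMul_single_single]
  | a::α₁, b::β₁, [] => by
    rw [qoshMul_nil_right, qosh_nil_right, qoshMul_single_single]
  | a::α₁, b::β₁, c::γ₁ => by
    have IH1 := qosh_assoc_key α₁ (b::β₁) (c::γ₁)
    have IH2 := qosh_assoc_key (a::α₁) β₁ (c::γ₁)
    have IH3 := qosh_assoc_key α₁ β₁ (c::γ₁)
    have IH4 := qosh_assoc_key (a::α₁) (b::β₁) γ₁
    have IH5 := qosh_assoc_key α₁ (b::β₁) γ₁
    have IH6 := qosh_assoc_key (a::α₁) β₁ γ₁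
    have IH7 := qosh_assoc_key α₁ β₁ γ₁
    rw [qosh_cons_cons a b α₁ β₁, qoshMul_add_left, qoshMul_add_left,
        qoshMul_smul_left, qoshMul_smul_left]
    rw [Llem a c γ₁ (qosh α₁ (b::β₁)) _ (wtc_qosh α₁ (b::β₁)),
        Llem b c γ₁ (qosh (a::α₁) β₁) _ (wtc_qosh (a::α₁) β₁),
        Llem (a+b) c γ₁ (qosh α₁ β₁) _ (wtc_qosh α₁ β₁)]
    rw [IH1, IH2, IH3, IH5, IH6, IH7]
    rw [qosh_cons_cons b c β₁ γ₁]
    simp only [qoshMul_add_right, qoshMul_smul_right]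
    rw [Rlem a b α₁ (qosh β₁ (c::γ₁)), Rlem a c α₁ (qosh (b::β₁) γ₁),
        Rlem a (b+c) α₁ (qosh β₁ γ₁)]
    rw [← IH4]
    rw [qosh_cons_cons a b α₁ β₁, qoshMul_add_left, qoshMul_add_left,
        qoshMul_smul_left, qoshMul_smul_left]
    simp only [Finsupp.mapDomain_add, Finsupp.mapDomain_smul, smul_add, smul_smul,
      wtc_cons, PNat.add_coe, add_assoc]
    module
  termination_by α β γ => α.length + β.length + γ.length
  decreasing_by all_goals (simp [List.length_cons]; try omega)
/-- The q-overlapping shuffle product on the free `ℤ[q]`-module with basis all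
compositions is associative. -/
theorem qoshMul_assoc :
    ∀ x y w : List ℕ+ →₀ Polynomial ℤ,
      qoshMul (qoshMul x y) w = qoshMul x (qoshMul y w) := by
  intro x y w
  induction x using Finsupp.induction_linear with
  | zero => rw [qoshMul_zero_left, qoshMul_zero_left, qoshMul_zero_left]
  | add x x' hx hx' =>
      rw [qoshMul_add_left, qoshMul_add_left, qoshMul_add_left, hx, hx']
  | single α cc =>
    induction y using Finsupp.induction_linear with
    | zero => simp only [qoshMul_zero_left, qoshMul_zero_right]
    | add y y' hy hy' =>
        rw [qoshMul_add_right, qoshMul_add_left, qoshMul_add_left,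
          qoshMul_add_right, hy, hy']
    | single β dd =>
      induction w using Finsupp.induction_linear with
      | zero => rw [qoshMul_zero_right, qoshMul_zero_right, qoshMul_zero_right]
      | add w w' hw hw' =>
          rw [qoshMul_add_right, qoshMul_add_right, qoshMul_add_right, hw, hw']
      | single γ ee =>
          rw [← Finsupp.smul_single_one α cc, ← Finsupp.smul_single_one β dd,
            ← Finsupp.smul_single_one γ ee]
          simp only [qoshMul_smul_left, qoshMul_smul_right, qoshMul_single_single]
          rw [qosh_assoc_key]
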